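/- In the field K = ℚ₂(√5), −1 is a sum of two squares. -/

import Mathlib

lemma exists_sqrt_neg15 : ∃ s : ℚ_[2], s ^ 2 = -15 := by
  have hnorm : ‖(Polynomial.X ^ 2 + Polynomial.C 15 : Polynomial ℤ_[2]).eval 1‖ <
      ‖(Polynomial.X ^ 2 + Polynomial.C 15 : Polynomial ℤ_[2]).derivative.eval 1‖ ^ 2 := by
    have h16 : ((Polynomial.X ^ 2 + Polynomial.C 15 : Polynomial ℤ_[2]).eval 1) = 2 ^ 4 := by
      simp; norm_num
    have hd : ((Polynomial.X ^ 2 + Polynomial.C 15 : Polynomial ℤ_[2]).derivative.eval 1) = 2 := by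
      simp
      norm_num
    rw [h16, hd]
    have hp : ‖(2 : ℤ_[2])‖ = (2 : ℝ)⁻¹ := by
      simpa using PadicInt.norm_p (p := 2)
    have hpow : ‖(2 : ℤ_[2]) ^ 4‖ = ((2 : ℝ)⁻¹) ^ 4 := by
      rw [← hp]
      rw [show ((2:ℤ_[2])^4) = 2*2*2*2 by ring]
      rw [norm_mul, norm_mul, norm_mul]
      ring
    rw [hpow, hp]
    norm_num
  obtain ⟨z, hz, -⟩ := hensels_lemma hnorm
  refine ⟨(z : ℚ_[2]), ?_⟩
  have h0 : (z : ℚ_[2]) ^ 2 + 15 = 0 := by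
    have := congrArg (PadicInt.Coe.ringHom (p := 2)) hz
    simp at this
    exact_mod_cast this
  linear_combination h0

/-- In the field K = ℚ₂(√5), −1 is a sum of two squares. -/
theorem neg_one_sum_two_squares_Q2_sqrt5 {K : Type*} [Field K] [Algebra ℚ_[2] K]
    (r : K) (hr : r ^ 2 = 5)
    (hgen : ∀ x : K, ∃ c d : ℚ_[2],
      x = algebraMap ℚ_[2] K c + algebraMap ℚ_[2] K d * r) :
    ∃ α β : K, α ^ 2 + β ^ 2 = -1 := by
  obtain ⟨s, hs⟩ := exists_sqrt_neg15
  haveI : CharZero K := charZero_of_injective_algebraMap (algebraMap ℚ_[2] K).injective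
  have h2 : (2 : K) ≠ 0 := by norm_num
  have h15 : (15 : K) ≠ 0 := by norm_num
  set S : K := algebraMap ℚ_[2] K s with hS
  have hS2 : S ^ 2 = -15 := by
    rw [hS, ← map_pow, hs, map_neg, map_ofNat]
  refine ⟨S * ((5 + r) / 2) / 15, S * ((5 - r) / 2) / 15, ?_⟩
  have h15eq : ((5 + r) / 2) ^ 2 + ((5 - r) / 2) ^ 2 = 15 := by
    field_simp
    linear_combination 2 * hr
  have key : (S * ((5 + r) / 2) / 15) ^ 2 + (S * ((5 - r) / 2) / 15) ^ 2
      = S ^ 2 * (((5 + r) / 2) ^ 2 + ((5 - r) / 2) ^ 2) / 15 ^ 2 := by ring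
  rw [key, h15eq, hS2]
  field_simp
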